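/- Let q ≥ 2 and let u ≥ q³+q² be an integer. Then the sum over a = 0, 1, 2, ... of the cardinalities of Ψ_a(u) = {(i,j) ∈ ℤ² : 0 ≤ i < q²+q, 0 ≤ qi + (q²+q)j < q²+q, q²i + (q³−q)j ≤ u − (q³+q²)a} equals (−q² + q + 2)/2 + ⌊u/q⌋. -/
import Mathlib


/-- The lattice point set Ψ_a(u). -/
def PsiA (q a u : ℤ) : Set (ℤ × ℤ) :=
  {p | 0 ≤ p.1 ∧ p.1 < q ^ 2 + q ∧
       0 ≤ q * p.1 + (q ^ 2 + q) * p.2 ∧ q * p.1 + (q ^ 2 + q) * p.2 < q ^ 2 + q ∧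
       q ^ 2 * p.1 + (q ^ 3 - q) * p.2 ≤ u - (q ^ 3 + q ^ 2) * a}

set_option maxHeartbeats 2000000 in
/-- For u ≥ q³+q², the sum over a = 0, 1, 2, ... of #Ψ_a(u) equals
    (−q²+q+2)/2 + ⌊u/q⌋. -/
theorem stmt_6 (q u : ℤ) (hq : 2 ≤ q) (hu : q ^ 3 + q ^ 2 ≤ u) :
    ((∑' a : ℕ, (PsiA q (a : ℤ) u).ncard : ℕ) : ℤ)
      = (-q ^ 2 + q + 2) / 2 + u / q := by
  have hq0 : (0:ℤ) < q := by linarith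
  have hq0' : q ≠ 0 := by linarith
  have hq1 : (0:ℤ) < q + 1 := by linarith
  have hQ1 : (0:ℤ) < q ^ 2 + q := by nlinarith
  have hu0 : (0:ℤ) < u := by nlinarith
  set A : ℕ := u.toNat + 1 with hA
  set F : ℕ → Finset (ℤ × ℤ) := fun a =>
    ((Finset.Icc (0:ℤ) (q ^ 2 + q - 1)) ×ˢ (Finset.Icc (-(q - 1)) (0:ℤ))).filter
      (fun p => 0 ≤ q * p.1 + (q ^ 2 + q) * p.2 ∧
                q * p.1 + (q ^ 2 + q) * p.2 < q ^ 2 + q ∧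
                q ^ 2 * p.1 + (q ^ 3 - q) * p.2 ≤ u - (q ^ 3 + q ^ 2) * (a:ℤ)) with hFdef
  have hFmem : ∀ (a : ℕ) (p : ℤ × ℤ), p ∈ F a ↔
      ((0 ≤ p.1 ∧ p.1 ≤ q ^ 2 + q - 1) ∧ (-(q - 1) ≤ p.2 ∧ p.2 ≤ 0)) ∧
      (0 ≤ q * p.1 + (q ^ 2 + q) * p.2 ∧
       q * p.1 + (q ^ 2 + q) * p.2 < q ^ 2 + q ∧
       q ^ 2 * p.1 + (q ^ 3 - q) * p.2 ≤ u - (q ^ 3 + q ^ 2) * (a:ℤ)) := by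
    intro a p
    simp only [hFdef, Finset.mem_filter, Finset.mem_product, Finset.mem_Icc]
  have hset : ∀ a : ℕ, PsiA q (a:ℤ) u = ↑(F a) := by
    intro a
    ext ⟨i, j⟩
    simp only [PsiA, Set.mem_setOf_eq, Finset.mem_coe]
    rw [hFmem]
    constructor
    · rintro ⟨h1, h2, h3, h4, h5⟩
      have hqi : 0 ≤ q * i := mul_nonneg hq0.le h1
      have hj1 : j ≤ 0 := by
        have : (q ^ 2 + q) * j < (q ^ 2 + q) * 1 := by linarith
        have := (mul_lt_mul_iff_right₀ hQ1).mp this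
        omega
      have hqi2 : q * i ≤ q * (q ^ 2 + q - 1) := by
        apply mul_le_mul_of_nonneg_left (by linarith) hq0.le
      have hj2 : -(q - 1) ≤ j := by
        have : (q ^ 2 + q) * (-q) < (q ^ 2 + q) * j := by nlinarith
        have := (mul_lt_mul_iff_right₀ hQ1).mp this
        omega
      exact ⟨⟨⟨h1, by linarith⟩, hj2, hj1⟩, h3, h4, h5⟩
    · rintro ⟨⟨⟨h1, h2⟩, _, _⟩, h3, h4, h5⟩
      exact ⟨h1, by linarith, h3, h4, h5⟩
  -- the modular key fact
  have hmodkey : ∀ (a : ℕ) (i j : ℤ), -(q - 1) ≤ j → j ≤ 0 →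
      (q * i + (q ^ 2 - 1) * j + (q ^ 2 + q) * (a:ℤ)) % q = -j := by
    intro a i j hj0 hj1
    have hrep : q * i + (q ^ 2 - 1) * j + (q ^ 2 + q) * (a:ℤ)
        = -j + (i + q * j + (q + 1) * (a:ℤ)) * q := by ring
    rw [hrep, Int.add_mul_emod_self_right, Int.emod_eq_of_lt (by linarith) (by linarith)]
  set W : Finset ℤ := (Finset.Icc (0:ℤ) (u / q)).filter (fun w => (q + 1) * (w % q) ≤ w)
    with hWdef
  have hudq : q ^ 2 + q ≤ u / q := (Int.le_ediv_iff_mul_le hq0).mpr (by nlinarith)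
  -- main bijection
  have hbij : ((Finset.range A).sigma fun a => F a).card = W.card := by
    apply Finset.card_bij
      (fun x _ => q * x.2.1 + (q ^ 2 - 1) * x.2.2 + (q ^ 2 + q) * (x.1 : ℤ))
    · rintro ⟨a, i, j⟩ hx
      rw [Finset.mem_sigma] at hx
      obtain ⟨-, hmem⟩ := hx
      rw [hFmem] at hmem
      obtain ⟨⟨⟨hi0, hi1⟩, hj0, hj1⟩, hc1, hc2, hc3⟩ := hmem
      have ha0 : (0:ℤ) ≤ (a:ℤ) := Int.natCast_nonneg a
      have t1 : (0:ℤ) ≤ (q + 1) * (-j) := mul_nonneg (by linarith) (by linarith)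
      have t2 : (0:ℤ) ≤ (q ^ 2 + q) * (a:ℤ) := mul_nonneg hQ1.le ha0
      have t3 : (0:ℤ) ≤ q * (-j) := mul_nonneg hq0.le (by linarith)
      rw [hWdef, Finset.mem_filter, Finset.mem_Icc]
      dsimp only
      refine ⟨⟨by linarith, (Int.le_ediv_iff_mul_le hq0).mpr (by linarith)⟩, ?_⟩
      rw [hmodkey a i j hj0 hj1]
      linarith
    · rintro ⟨a₁, i₁, j₁⟩ hx₁ ⟨a₂, i₂, j₂⟩ hx₂ heq
      rw [Finset.mem_sigma] at hx₁ hx₂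
      obtain ⟨-, hmem₁⟩ := hx₁
      obtain ⟨-, hmem₂⟩ := hx₂
      rw [hFmem] at hmem₁ hmem₂
      obtain ⟨⟨⟨hi0, hi1⟩, hj0, hj1⟩, hc1, hc2, hc3⟩ := hmem₁
      obtain ⟨⟨⟨hi0', hi1'⟩, hj0', hj1'⟩, hc1', hc2', hc3'⟩ := hmem₂
      dsimp only at heq
      have e1 := hmodkey a₁ i₁ j₁ hj0 hj1
      have e2 := hmodkey a₂ i₂ j₂ hj0' hj1'
      rw [heq, e2] at e1
      have hj : j₁ = j₂ := by linarith
      subst hj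
      have hA' : q * i₁ + (q ^ 2 + q) * (a₁:ℤ) = q * i₂ + (q ^ 2 + q) * (a₂:ℤ) := by
        linarith
      have e3 : (q ^ 2 + q) * ((a₁:ℤ) - (a₂:ℤ)) < (q ^ 2 + q) * 1 := by linarith
      have e4 : (q ^ 2 + q) * (-1) < (q ^ 2 + q) * ((a₁:ℤ) - (a₂:ℤ)) := by linarith
      have e3' := (mul_lt_mul_iff_right₀ hQ1).mp e3
      have e4' := (mul_lt_mul_iff_right₀ hQ1).mp e4
      have ha : a₁ = a₂ := by omega
      subst ha
      have hi : i₁ = i₂ := by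
        have h5 : q * i₁ = q * i₂ := by linarith
        exact mul_left_cancel₀ hq0' h5
      subst hi
      rfl
    · intro w hw
      rw [hWdef, Finset.mem_filter, Finset.mem_Icc] at hw
      obtain ⟨⟨hw0, hwu⟩, hwc⟩ := hw
      have hm0 : 0 ≤ w % q := Int.emod_nonneg w hq0'
      have hmq : w % q < q := Int.emod_lt_of_pos w hq0
      have hqw : q * (w / q) + w % q = w := Int.mul_ediv_add_emod w q
      set m : ℤ := w % q with hm
      have hdvd : q ∣ (w - (q + 1) * m) := ⟨w / q - m, by linear_combination -hqw⟩
      set w' : ℤ := (w - (q + 1) * m) / q with hw'def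
      have hw'q : q * w' = w - (q + 1) * m := Int.mul_ediv_cancel' hdvd
      have hw'0 : 0 ≤ w' := Int.ediv_nonneg (by linarith) hq0.le
      set r : ℤ := w' % (q + 1) with hr
      set aZ : ℤ := w' / (q + 1) with haZdef
      have hr0 : 0 ≤ r := Int.emod_nonneg w' (by linarith)
      have hrq : r < q + 1 := Int.emod_lt_of_pos w' hq1
      have haZ : (q + 1) * aZ + r = w' := Int.mul_ediv_add_emod w' (q + 1)
      have haZ0 : 0 ≤ aZ := Int.ediv_nonneg hw'0 hq1.le
      have hqwu : w * q ≤ u := (Int.le_ediv_iff_mul_le hq0).mp hwu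
      have s1 : aZ ≤ w' := by nlinarith [mul_nonneg hq0.le haZ0]
      have s2 : w' ≤ w := by
        nlinarith [mul_nonneg (by linarith : (0:ℤ) ≤ q + 1) hm0,
          mul_nonneg (by linarith : (0:ℤ) ≤ q - 1) hw'0]
      have s3 : w ≤ u := by
        nlinarith [mul_nonneg (by linarith : (0:ℤ) ≤ q - 1) hw0]
      have haZu : aZ ≤ u := by linarith
      have hacast : ((aZ.toNat : ℕ) : ℤ) = aZ := Int.toNat_of_nonneg haZ0
      clear_value m w' r aZ
      refine ⟨⟨aZ.toNat, ((q + 1) * m + r, -m)⟩, ?_, ?_⟩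
      · rw [Finset.mem_sigma, Finset.mem_range, hFmem]
        constructor
        · exact Nat.lt_succ_of_le (Int.toNat_le_toNat haZu)
        · rw [hacast]
          dsimp only
          have hmub : (q + 1) * m ≤ (q + 1) * (q - 1) :=
            mul_le_mul_of_nonneg_left (by omega) hq1.le
          refine ⟨⟨⟨?_, ?_⟩, by linarith, by linarith⟩, ?_, ?_, ?_⟩
          · have := mul_nonneg hq1.le hm0
            linarith
          · linarith
          · have hcomp : q * ((q + 1) * m + r) + (q ^ 2 + q) * (-m) = q * r := by ring
            rw [hcomp]
            exact mul_nonneg hq0.le hr0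
          · have hcomp : q * ((q + 1) * m + r) + (q ^ 2 + q) * (-m) = q * r := by ring
            rw [hcomp]
            have : q * r ≤ q * q := mul_le_mul_of_nonneg_left (by linarith) hq0.le
            nlinarith [sq_nonneg q]
          · have hkey : q ^ 2 * ((q + 1) * m + r) + (q ^ 3 - q) * (-m)
                + (q ^ 3 + q ^ 2) * aZ = q * w := by
              linear_combination q * hw'q + q ^ 2 * haZ
            linarith
      · dsimp only
        rw [hacast]
        linear_combination hw'q + q * haZ
  -- counting the complement
  set N : Finset ℤ := (Finset.Icc (0:ℤ) (u / q)).filter (fun w => ¬ ((q + 1) * (w % q) ≤ w))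
    with hNdef
  have hsplit : W.card + N.card = (u / q + 1).toNat := by
    rw [hWdef, hNdef, Finset.card_filter_add_card_filter_not, Int.card_Icc]
    norm_num
  have hqtn : ((q.toNat : ℤ)) = q := Int.toNat_of_nonneg hq0.le
  set D : Finset ((_ : ℕ) × ℕ) := (Finset.range q.toNat).sigma (fun m => Finset.range m)
    with hDdef
  have hDcard : 2 * D.card = q.toNat * (q.toNat - 1) := by
    rw [hDdef, Finset.card_sigma]
    simp only [Finset.card_range]
    rw [mul_comm]
    exact Finset.sum_range_id_mul_two q.toNat
  have hND : D.card = N.card := by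
    apply Finset.card_bij (fun x _ => (x.1 : ℤ) + (x.2 : ℤ) * q)
    · rintro ⟨m, k⟩ hx
      rw [hDdef, Finset.mem_sigma, Finset.mem_range, Finset.mem_range] at hx
      dsimp only at hx
      obtain ⟨hmq', hkm⟩ := hx
      have hM : (m:ℤ) < q := by omega
      have hK : (k:ℤ) < (m:ℤ) := by exact_mod_cast hkm
      have hM0 : (0:ℤ) ≤ (m:ℤ) := Int.natCast_nonneg m
      have hK0 : (0:ℤ) ≤ (k:ℤ) := Int.natCast_nonneg k
      rw [hNdef, Finset.mem_filter, Finset.mem_Icc]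
      dsimp only
      have hvm : ((m:ℤ) + (k:ℤ) * q) % q = (m:ℤ) := by
        rw [Int.add_mul_emod_self_right, Int.emod_eq_of_lt hM0 hM]
      have hkq : (k:ℤ) * q ≤ (q - 2) * q := mul_le_mul_of_nonneg_right (by linarith) hq0.le
      refine ⟨⟨by positivity, by nlinarith⟩, ?_⟩
      rw [hvm, not_le]
      nlinarith [mul_lt_mul_of_pos_right hK hq0]
    · rintro ⟨m₁, k₁⟩ hx₁ ⟨m₂, k₂⟩ hx₂ heq
      rw [hDdef, Finset.mem_sigma, Finset.mem_range, Finset.mem_range] at hx₁ hx₂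
      dsimp only at hx₁ hx₂ heq
      have e1 : ((m₁:ℤ) + (k₁:ℤ) * q) % q = (m₁:ℤ) := by
        rw [Int.add_mul_emod_self_right, Int.emod_eq_of_lt (Int.natCast_nonneg _) (by omega)]
      have e2 : ((m₂:ℤ) + (k₂:ℤ) * q) % q = (m₂:ℤ) := by
        rw [Int.add_mul_emod_self_right, Int.emod_eq_of_lt (Int.natCast_nonneg _) (by omega)]
      rw [heq, e2] at e1
      have hm : m₁ = m₂ := by exact_mod_cast e1.symm
      subst hm
      have hk : (k₁:ℤ) = (k₂:ℤ) :=
        mul_right_cancel₀ hq0' (by linarith)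
      have hk' : k₁ = k₂ := by exact_mod_cast hk
      subst hk'
      rfl
    · intro w hw
      rw [hNdef, Finset.mem_filter, Finset.mem_Icc, not_le] at hw
      obtain ⟨⟨hw0, hwu⟩, hwc⟩ := hw
      have hm0 : 0 ≤ w % q := Int.emod_nonneg w hq0'
      have hmq : w % q < q := Int.emod_lt_of_pos w hq0
      have hqw : q * (w / q) + w % q = w := Int.mul_ediv_add_emod w q
      have hd0 : 0 ≤ w / q := Int.ediv_nonneg hw0 hq0.le
      have hdm : w / q < w % q := by
        have h6 : q * (w / q) < q * (w % q) := by linarith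
        exact lt_of_mul_lt_mul_left h6 hq0.le
      refine ⟨⟨(w % q).toNat, (w / q).toNat⟩, ?_, ?_⟩
      · rw [hDdef, Finset.mem_sigma, Finset.mem_range, Finset.mem_range]
        dsimp only
        omega
      · dsimp only
        rw [Int.toNat_of_nonneg hm0, Int.toNat_of_nonneg hd0]
        linarith
  -- emptiness for large a
  have hnczero : ∀ a ∉ Finset.range A, (PsiA q (a:ℤ) u).ncard = 0 := by
    intro a ha
    rw [Finset.mem_range] at ha
    have hau : u < (a:ℤ) := by omega
    rw [hset a, Set.ncard_coe_finset, Finset.card_eq_zero,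
      Finset.eq_empty_iff_forall_notMem]
    rintro ⟨i, j⟩ hp
    rw [hFmem] at hp
    obtain ⟨⟨⟨hi0, hi1⟩, hj0, hj1⟩, hc1, hc2, hc3⟩ := hp
    have t1 : (0:ℤ) ≤ q * (q * i + (q ^ 2 + q) * j) := mul_nonneg hq0.le hc1
    have t2 : (0:ℤ) ≤ (q ^ 2 + q) * (-j) := mul_nonneg hQ1.le (by linarith)
    have t3 : (0:ℤ) ≤ (q ^ 3 + q ^ 2 - 1) * (a:ℤ) :=
      mul_nonneg (by nlinarith) (Int.natCast_nonneg a)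
    linarith
  -- assemble
  have key : (∑' a : ℕ, (PsiA q (a:ℤ) u).ncard) = W.card := by
    rw [tsum_eq_sum hnczero,
      Finset.sum_congr rfl (fun a _ => by rw [hset a, Set.ncard_coe_finset]),
      ← Finset.card_sigma, hbij]
  rw [key]
  have h1 : ((W.card + N.card : ℕ) : ℤ) = (((u / q + 1).toNat : ℕ) : ℤ) := by
    exact_mod_cast congrArg (Nat.cast : ℕ → ℤ) hsplit
  rw [Int.toNat_of_nonneg (by linarith : (0:ℤ) ≤ u / q + 1)] at h1
  push_cast at h1
  have h2 : (2 : ℤ) * (D.card : ℤ) = q * (q - 1) := by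
    have := congrArg (Nat.cast : ℕ → ℤ) hDcard
    push_cast [Nat.cast_sub (by omega : 1 ≤ q.toNat)] at this
    rw [hqtn] at this
    linarith
  have hNDZ : (N.card : ℤ) = (D.card : ℤ) := by exact_mod_cast hND.symm
  have hfin : -q ^ 2 + q + 2 = 2 * (1 - (D.card : ℤ)) := by linarith
  rw [hfin, Int.mul_ediv_cancel_left _ (by norm_num : (2:ℤ) ≠ 0)]
  linarith
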